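/- Let (E, ℰ, μ) be a σ-finite measure space, let I be a nonempty index set, and let (f_i)_{i∈I} be a family of measurable functions E → ℝ such that there is a measurable g : E → [0,∞) with |f_i(e)| ≤ g(e) for all i ∈ I and e ∈ E. Then there exist a measurable function f* : E → ℝ and a countable subset J ⊆ I such that: (i) f* = inf_{i∈J} f_i μ-almost everywhere; (ii) f* ≤ f_i μ-almost everywhere for every i ∈ I; (iii) for every measurable h : E → ℝ satisfying h ≤ f_i μ-almost everywhere for all i ∈ I, one has h ≤ f* μ-almost everywhere. That is, the essential infimum of the family (f_i)_{i∈I} exists and is attained along a countable subfamily. -/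

import Mathlib

open MeasureTheory

/-- existence of an essential infimum of a uniformly dominated family of
measurable functions on a σ-finite measure space, attained along a countable subfamily. -/
theorem stmt6 {E : Type*} [MeasurableSpace E] (μ : Measure E) [SigmaFinite μ]
    {I : Type*} [Nonempty I]
    (f : I → E → ℝ) (hf : ∀ i, Measurable (f i))
    (g : E → ℝ) (hg : Measurable g) (hg_nonneg : ∀ e, 0 ≤ g e)
    (hdom : ∀ i, ∀ e, |f i e| ≤ g e) :
    ∃ (fstar : E → ℝ) (J : Set I), Measurable fstar ∧ J.Countable ∧
      (∀ᵐ e ∂μ, fstar e = ⨅ j : J, f j e) ∧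
      (∀ i, ∀ᵐ e ∂μ, fstar e ≤ f i e) ∧
      (∀ h : E → ℝ, Measurable h → (∀ i, ∀ᵐ e ∂μ, h e ≤ f i e) →
        ∀ᵐ e ∂μ, h e ≤ fstar e) := by
  classical
  set ν := μ.toFinite with hνdef
  have hμν : μ ≪ ν := absolutelyContinuous_toFinite μ
  -- the infimum along a sequence of indices
  set F : (ℕ → I) → E → ℝ := fun u e => ⨅ n, f (u n) e with hFdef
  have hbdd : ∀ (u : ℕ → I) (e : E), BddBelow (Set.range fun n => f (u n) e) := by
    intro u e
    refine ⟨-g e, ?_⟩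
    rintro x ⟨n, rfl⟩
    linarith [(abs_le.1 (hdom (u n) e)).1]
  have hF_meas : ∀ u, Measurable (F u) := fun u => Measurable.iInf fun n => hf (u n)
  have hF_le : ∀ u n e, F u e ≤ f (u n) e := fun u n e => ciInf_le (hbdd u e) n
  -- the transformed integral functional
  set φ : (ℕ → I) → ℝ := fun u => ∫ e, Real.arctan (F u e) ∂ν with hφdef
  have hint : ∀ u, Integrable (fun e => Real.arctan (F u e)) ν := by
    intro u
    refine (integrable_const (Real.pi / 2)).mono'
      ((Real.continuous_arctan.measurable.comp (hF_meas u)).aestronglyMeasurable) ?_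
    refine Filter.Eventually.of_forall fun e => ?_
    rw [Real.norm_eq_abs, abs_le]
    constructor
    · linarith [Real.neg_pi_div_two_lt_arctan (F u e)]
    · exact (Real.arctan_lt_pi_div_two _).le
  have hφ_mono : ∀ u w, (∀ e, F u e ≤ F w e) → φ u ≤ φ w := by
    intro u w huw
    exact integral_mono (hint u) (hint w) fun e => Real.arctan_strictMono.monotone (huw e)
  -- the infimum of the transformed integrals
  set A : Set ℝ := Set.range φ with hAdef
  have hA_ne : A.Nonempty := Set.range_nonempty _
  have hA_bdd : BddBelow A := by
    refine ⟨(ν Set.univ).toReal • (-(Real.pi / 2)), ?_⟩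
    rintro x ⟨u, rfl⟩
    rw [show (ν Set.univ).toReal = ν.real Set.univ from rfl, ← integral_const]
    refine integral_mono (integrable_const _) (hint u) fun e => ?_
    exact (Real.neg_pi_div_two_lt_arctan (F u e)).le
  set a : ℝ := sInf A with hadef
  -- choose approximating sequences and combine them
  have hchoice : ∀ k : ℕ, ∃ u : ℕ → I, φ u < a + 1 / (k + 1) := by
    intro k
    have : a < a + 1 / (k + 1) := by
      have : (0 : ℝ) < 1 / (k + 1) := by positivity
      linarith
    obtain ⟨x, ⟨u, rfl⟩, hx⟩ := exists_lt_of_csInf_lt hA_ne this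
    exact ⟨u, hx⟩
  choose uk huk using hchoice
  set v : ℕ → I := fun m => uk m.unpair.1 m.unpair.2 with hvdef
  have hv_le : ∀ k e, F v e ≤ F (uk k) e := by
    intro k e
    refine le_ciInf fun n => ?_
    have := ciInf_le (hbdd v e) (Nat.pair k n)
    simpa [hvdef, Nat.unpair_pair] using this
  have hφv_le : φ v ≤ a := by
    refine le_of_forall_pos_lt_add fun ε hε => ?_
    obtain ⟨k, hk⟩ := exists_nat_one_div_lt hε
    have h1 : φ v ≤ φ (uk k) := hφ_mono _ _ (hv_le k)
    have h2 := huk k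
    calc φ v ≤ φ (uk k) := h1
      _ < a + 1 / (k + 1) := h2
      _ < a + ε := by linarith
  have hφv : φ v = a := le_antisymm hφv_le (csInf_le hA_bdd ⟨v, rfl⟩)
  -- the essential infimum
  refine ⟨F v, Set.range v, hF_meas v, Set.countable_range v, ?_, ?_, ?_⟩
  · -- F v equals the infimum over the countable set, everywhere
    refine Filter.Eventually.of_forall fun e => ?_
    show F v e = ⨅ j : (Set.range v), f j e
    rw [hFdef]
    show ⨅ n, f (v n) e = ⨅ j : (Set.range v), f j e
    rw [iInf, iInf]
    congr 1
    ext x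
    constructor
    · rintro ⟨n, rfl⟩; exact ⟨⟨v n, n, rfl⟩, rfl⟩
    · rintro ⟨⟨j, n, rfl⟩, rfl⟩; exact ⟨n, rfl⟩
  · -- F v ≤ f i a.e. for every i
    intro i
    set w : ℕ → I := fun m => Nat.casesOn m i (fun n => v n) with hwdef
    have hw_le_v : ∀ e, F w e ≤ F v e := by
      intro e
      refine le_ciInf fun n => ?_
      exact ciInf_le (hbdd w e) (n + 1)
    have hw_le_i : ∀ e, F w e ≤ f i e := fun e => ciInf_le (hbdd w e) 0
    have hφw : φ w = φ v := by
      refine le_antisymm (hφ_mono _ _ hw_le_v) ?_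
      rw [hφv]; exact csInf_le hA_bdd ⟨w, rfl⟩
    have heq : (fun e => Real.arctan (F w e)) =ᵐ[ν] fun e => Real.arctan (F v e) := by
      rw [← integral_eq_iff_of_ae_le (hint w) (hint v)
        (Filter.Eventually.of_forall fun e => Real.arctan_strictMono.monotone (hw_le_v e))]
      exact hφw
    have heq' : ∀ᵐ e ∂ν, F w e = F v e := by
      filter_upwards [heq] with e he using Real.arctan_injective he
    have hν_le : ∀ᵐ e ∂ν, F v e ≤ f i e := by
      filter_upwards [heq'] with e he
      rw [← he]; exact hw_le_i e
    exact hμν.ae_le hν_le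
  · -- maximality among a.e. lower bounds
    intro h hh hhle
    have : ∀ᵐ e ∂μ, ∀ n, h e ≤ f (v n) e := ae_all_iff.2 fun n => hhle (v n)
    filter_upwards [this] with e he
    exact le_ciInf fun n => he n
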